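/- For 1 ≤ s < t < ∞, if an infinite connected locally finite weighted graph (V, μ) is L^s-parabolic, then it is L^t-parabolic. -/

import Mathlib

open scoped ENNReal

/-- Vertex weight `μ(x) = ∑_y μ_{xy}` of a weighted graph. -/
noncomputable def vertexWeight {V : Type*} (μ : V → V → ℝ≥0∞) (x : V) : ℝ≥0∞ := ∑' y, μ x y

/-- Transition kernel `P(x,y) = μ_{xy}/μ(x)` of the random walk. -/
noncomputable def transKer {V : Type*} (μ : V → V → ℝ≥0∞) (x y : V) : ℝ≥0∞ :=
  μ x y / vertexWeight μ x

open Classical in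
/-- Transition kernel of the walk killed on exiting `U`. -/
noncomputable def killedKer {V : Type*} (μ : V → V → ℝ≥0∞) (U : Set V) (x y : V) : ℝ≥0∞ :=
  if x ∈ U ∧ y ∈ U then transKer μ x y else 0

open Classical in
/-- `n`-step iterates `P^U_n` of the killed kernel, with `P^U_0 = I_U`. -/
noncomputable def killedKerN {V : Type*} (μ : V → V → ℝ≥0∞) (U : Set V) : ℕ → V → V → ℝ≥0∞
  | 0 => fun x y => if x = y ∧ x ∈ U then 1 else 0
  | n + 1 => fun x y => ∑' z, killedKer μ U x z * killedKerN μ U n z y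

/-- Killed Green function `g^U(x,y) = ∑_n P^U_n(x,y)/μ(y)`. -/
noncomputable def greenKilled {V : Type*} (μ : V → V → ℝ≥0∞) (U : Set V) (x y : V) : ℝ≥0∞ :=
  ∑' n, killedKerN μ U n x y / vertexWeight μ y

/-- Green function `g(x,y) = ∑_n pₙ(x,y)` of the graph. -/
noncomputable def green {V : Type*} (μ : V → V → ℝ≥0∞) (x y : V) : ℝ≥0∞ :=
  greenKilled μ Set.univ x y

/-- Killed Green operator `G^U f(x) = ∑_{y∈U} g^U(x,y) f(y) μ(y)`. -/
noncomputable def greenOp {V : Type*} (μ : V → V → ℝ≥0∞) (U : Set V) (f : V → ℝ≥0∞) (x : V) :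
    ℝ≥0∞ :=
  ∑' y, greenKilled μ U x y * f y * vertexWeight μ y

/-- The `L^q`-Green function `g_q(x,y) = ∑_z g(x,z) g(z,y)^{q-1} μ(z)`. -/
noncomputable def greenQ {V : Type*} (μ : V → V → ℝ≥0∞) (q : ℝ) (x y : V) : ℝ≥0∞ :=
  ∑' z, green μ x z * green μ z y ^ (q - 1) * vertexWeight μ z

/-- The `μ`-weighted `L^q(U)` norm. -/
noncomputable def lqNorm {V : Type*} (μ : V → V → ℝ≥0∞) (U : Set V) (q : ℝ) (h : V → ℝ≥0∞) :
    ℝ≥0∞ :=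
  (∑' x, U.indicator (fun x => h x ^ q * vertexWeight μ x) x) ^ (1 / q)

/-- The `L^p`-capacity `C_p(K,U)`:
`sup { ν(K)^p : ν = fμ, f ∈ ℓ⁺(K), ‖G^U f‖_{L^q(U)} ≤ 1 }`, `1/p + 1/q = 1`. -/
noncomputable def lpCap {V : Type*} (μ : V → V → ℝ≥0∞) (p q : ℝ) (K : Finset V) (U : Set V) :
    ℝ≥0∞ :=
  ⨆ f ∈ {f : V → ℝ≥0∞ | (∀ x, x ∉ K → f x = 0) ∧ lqNorm μ U q (greenOp μ U f) ≤ 1},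
    (∑ x ∈ K, f x * vertexWeight μ x) ^ p

/-- A weighted graph is locally finite if every vertex has finitely many neighbours. -/
def LocallyFinite' {V : Type*} (μ : V → V → ℝ≥0∞) : Prop :=
  ∀ x, (Function.support (μ x)).Finite

open Classical in
/-- The `μ`-weighted `L^q` norm on `V` for an extended exponent `q ∈ (1,∞]`
(with the supremum norm when `q = ∞`). -/
noncomputable def lqNormE {V : Type*} (μ : V → V → ℝ≥0∞) (q : ℝ≥0∞) (h : V → ℝ≥0∞) : ℝ≥0∞ :=
  if q = ⊤ then ⨆ x, h x
  else (∑' x, h x ^ q.toReal * vertexWeight μ x) ^ (1 / q.toReal)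

/-- The `L^p`-capacity `C_p(K) = sup{ν(K)^p : ν = fμ, f ∈ ℓ⁺(K), ‖Gf‖_{L^q(V)} ≤ 1}`,
where `q ∈ (1,∞]` is the Hölder conjugate of `p`. -/
noncomputable def lpCapE {V : Type*} (μ : V → V → ℝ≥0∞) (p : ℝ) (q : ℝ≥0∞) (K : Finset V) :
    ℝ≥0∞ :=
  ⨆ f ∈ {f : V → ℝ≥0∞ | (∀ x, x ∉ K → f x = 0) ∧
      lqNormE μ q (greenOp μ Set.univ f) ≤ 1},
    (∑ x ∈ K, f x * vertexWeight μ x) ^ p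

section MaxPrinciple

open Classical

variable {V : Type*} (μ : V → V → ℝ≥0∞)

private lemma kerN_zero' (x y : V) :
    killedKerN μ Set.univ 0 x y = if x = y then 1 else 0 := by
  simp [killedKerN]

private lemma kerN_succ' (n : ℕ) (x y : V) :
    killedKerN μ Set.univ (n + 1) x y = ∑' z, transKer μ x z * killedKerN μ Set.univ n z y := by
  simp [killedKerN, killedKer]

/-- First-hitting-time kernel of `y`. -/
noncomputable def hitF (y : V) : ℕ → V → ℝ≥0∞
  | 0 => fun x => if x = y then 1 else 0
  | n + 1 => fun x => if x = y then 0 else ∑' z, transKer μ x z * hitF y n z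

private lemma transKer_tsum (x : V)
    (h0 : vertexWeight μ x ≠ 0) (h1 : vertexWeight μ x ≠ ⊤) :
    ∑' z, transKer μ x z = 1 := by
  simp only [transKer, div_eq_mul_inv]
  rw [ENNReal.tsum_mul_right]
  have hv : ∑' z, μ x z = vertexWeight μ x := rfl
  rw [hv]
  exact ENNReal.mul_inv_cancel h0 h1

private lemma hitF_sum_le
    (h0 : ∀ x, vertexWeight μ x ≠ 0) (h1 : ∀ x, vertexWeight μ x ≠ ⊤) (y : V) :
    ∀ n x, ∑ k ∈ Finset.range (n + 1), hitF μ y k x ≤ 1 := by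
  intro n
  induction n with
  | zero =>
    intro x
    simp only [zero_add, Finset.sum_range_one, hitF]
    split <;> norm_num
  | succ n ih =>
    intro x
    rw [Finset.sum_range_succ']
    by_cases hxy : x = y
    · subst hxy
      have hz : ∀ k ∈ Finset.range (n + 1), hitF μ x (k + 1) x = 0 :=
        fun k _ => by simp [hitF]
      rw [Finset.sum_congr rfl hz]
      simp [hitF]
    · have hz : ∀ k ∈ Finset.range (n + 1),
          hitF μ y (k + 1) x = ∑' z, transKer μ x z * hitF μ y k z :=
        fun k _ => by simp [hitF, hxy]
      rw [Finset.sum_congr rfl hz]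
      have hz0 : hitF μ y 0 x = 0 := by simp [hitF, hxy]
      rw [hz0, add_zero, ← Summable.tsum_finsetSum (fun i _ => ENNReal.summable)]
      calc ∑' z, ∑ k ∈ Finset.range (n + 1), transKer μ x z * hitF μ y k z
          = ∑' z, transKer μ x z * ∑ k ∈ Finset.range (n + 1), hitF μ y k z := by
            simp_rw [Finset.mul_sum]
        _ ≤ ∑' z, transKer μ x z * 1 :=
            ENNReal.tsum_le_tsum fun z => mul_le_mul_right (ih z) _
        _ = ∑' z, transKer μ x z := by simp
        _ = 1 := transKer_tsum μ x (h0 x) (h1 x)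

private lemma hitF_sum_le' 
    (h0 : ∀ x, vertexWeight μ x ≠ 0) (h1 : ∀ x, vertexWeight μ x ≠ ⊤) (y : V) (N : ℕ) (x : V) :
    ∑ k ∈ Finset.range N, hitF μ y k x ≤ 1 := by
  cases N with
  | zero => simp
  | succ n => exact hitF_sum_le μ h0 h1 y n x

private lemma kerN_decomp (y : V) :
    ∀ n x, killedKerN μ Set.univ n x y
      = ∑ k ∈ Finset.range (n + 1), hitF μ y k x * killedKerN μ Set.univ (n - k) y y := by
  intro n
  induction n with
  | zero =>
    intro x
    rw [Finset.sum_range_one]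
    simp [kerN_zero', hitF]
  | succ n ih =>
    intro x
    by_cases hxy : x = y
    · subst hxy
      rw [Finset.sum_range_succ']
      have hz : ∀ k ∈ Finset.range (n + 1),
          hitF μ x (k + 1) x * killedKerN μ Set.univ (n + 1 - (k + 1)) x x = 0 :=
        fun k _ => by simp [hitF]
      rw [Finset.sum_congr rfl hz]
      simp [hitF]
    · rw [kerN_succ']
      calc ∑' z, transKer μ x z * killedKerN μ Set.univ n z y
          = ∑' z, ∑ k ∈ Finset.range (n + 1),
              transKer μ x z * (hitF μ y k z * killedKerN μ Set.univ (n - k) y y) := by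
            refine tsum_congr fun z => ?_
            rw [ih z, Finset.mul_sum]
        _ = ∑ k ∈ Finset.range (n + 1), ∑' z,
              transKer μ x z * (hitF μ y k z * killedKerN μ Set.univ (n - k) y y) :=
            Summable.tsum_finsetSum fun i _ => ENNReal.summable
        _ = ∑ k ∈ Finset.range (n + 1),
              (∑' z, transKer μ x z * hitF μ y k z) * killedKerN μ Set.univ (n - k) y y := by
            refine Finset.sum_congr rfl fun k _ => ?_
            simp_rw [← mul_assoc]
            exact ENNReal.tsum_mul_right
        _ = ∑ k ∈ Finset.range (n + 1),
              hitF μ y (k + 1) x * killedKerN μ Set.univ (n - k) y y := by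
            refine Finset.sum_congr rfl fun k _ => ?_
            congr 1
            simp [hitF, hxy]
        _ = ∑ k ∈ Finset.range (n + 1 + 1),
              hitF μ y k x * killedKerN μ Set.univ (n + 1 - k) y y := by
            rw [Finset.sum_range_succ'
              (fun k => hitF μ y k x * killedKerN μ Set.univ (n + 1 - k) y y) (n + 1)]
            have hz0 : hitF μ y 0 x = 0 := by simp [hitF, hxy]
            simp [hz0, Nat.succ_sub_succ]

private lemma green_le_diag
    (h0 : ∀ x, vertexWeight μ x ≠ 0) (h1 : ∀ x, vertexWeight μ x ≠ ⊤) (x y : V) :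
    green μ x y ≤ green μ y y := by
  have key : ∑' n, killedKerN μ Set.univ n x y ≤ ∑' n, killedKerN μ Set.univ n y y := by
    refine ENNReal.tsum_le_of_sum_range_le fun N => ?_
    set S := (Finset.range N).sigma (fun n => Finset.range (n + 1)) with hS
    have hmem : ∀ p : Σ _ : ℕ, ℕ, p ∈ S → p.1 < N ∧ p.2 ≤ p.1 := by
      intro p hp
      obtain ⟨hp1, hp2⟩ := Finset.mem_sigma.mp hp
      exact ⟨Finset.mem_range.mp hp1, Nat.lt_succ_iff.mp (Finset.mem_range.mp hp2)⟩
    have hinj : ∀ p ∈ S, ∀ q ∈ S,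
        (fun p : Σ _ : ℕ, ℕ => (p.2, p.1 - p.2)) p
          = (fun p : Σ _ : ℕ, ℕ => (p.2, p.1 - p.2)) q → p = q := by
      intro p hp q hq h
      obtain ⟨-, hp2⟩ := hmem p hp
      obtain ⟨-, hq2⟩ := hmem q hq
      simp only [Prod.mk.injEq] at h
      obtain ⟨h1', h2'⟩ := h
      have hfst : p.1 = q.1 := by omega
      exact Sigma.ext hfst (heq_of_eq h1')
    have hsub : S.image (fun p : Σ _ : ℕ, ℕ => (p.2, p.1 - p.2))
        ⊆ Finset.range N ×ˢ Finset.range N := by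
      intro q hq
      obtain ⟨p, hp, rfl⟩ := Finset.mem_image.mp hq
      obtain ⟨hp1, hp2⟩ := hmem p hp
      simp only [Finset.mem_product, Finset.mem_range]
      omega
    calc ∑ n ∈ Finset.range N, killedKerN μ Set.univ n x y
        = ∑ p ∈ S, hitF μ y p.2 x * killedKerN μ Set.univ (p.1 - p.2) y y := by
          rw [hS, Finset.sum_sigma]
          exact Finset.sum_congr rfl fun n _ => kerN_decomp μ y n x
      _ = ∑ q ∈ S.image (fun p : Σ _ : ℕ, ℕ => (p.2, p.1 - p.2)),
            hitF μ y q.1 x * killedKerN μ Set.univ q.2 y y := by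
          rw [Finset.sum_image hinj]
      _ ≤ ∑ q ∈ Finset.range N ×ˢ Finset.range N,
            hitF μ y q.1 x * killedKerN μ Set.univ q.2 y y :=
          Finset.sum_le_sum_of_subset hsub
      _ = (∑ k ∈ Finset.range N, hitF μ y k x)
            * ∑ m ∈ Finset.range N, killedKerN μ Set.univ m y y := by
          rw [Finset.sum_mul_sum, Finset.sum_product]
      _ ≤ 1 * ∑' m, killedKerN μ Set.univ m y y := by
          gcongr
          · exact hitF_sum_le' μ h0 h1 y N x
          · exact ENNReal.sum_le_tsum _
      _ = ∑' m, killedKerN μ Set.univ m y y := one_mul _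
  have hdiv : ∀ a b : V,
      green μ a b = (∑' n, killedKerN μ Set.univ n a b) / vertexWeight μ b := by
    intro a b
    simp only [green, greenKilled, div_eq_mul_inv]
    exact ENNReal.tsum_mul_right
  rw [hdiv, hdiv]
  exact ENNReal.div_le_div_right key _

end MaxPrinciple

open Classical in
/-- for `1 ≤ s < t < ∞`, if an infinite connected locally finite
weighted graph is `L^s`-parabolic then it is `L^t`-parabolic. -/
theorem lsParabolic_implies_ltParabolic {V : Type*} [Infinite V]
    (μ : V → V → ℝ≥0∞)
    (hsym : ∀ x y, μ x y = μ y x)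
    (hloc : LocallyFinite' μ)
    (hpos : ∀ x, 0 < vertexWeight μ x)
    (hfin : ∀ x, vertexWeight μ x < ⊤)
    (hconn : ∀ x y : V, ∃ n, 0 < killedKerN μ Set.univ n x y)
    (s t : ℝ) (hs : 1 ≤ s) (hst : s < t)
    (s' t' : ℝ≥0∞)
    (hs' : s' = if s = 1 then ⊤ else ENNReal.ofReal (s / (s - 1)))
    (ht' : t' = ENNReal.ofReal (t / (t - 1)))
    (hpar : ∀ K : Finset V, lpCapE μ s s' K = 0) :
    ∀ K : Finset V, lpCapE μ t t' K = 0 := by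
  intro K
  have ht1 : (1 : ℝ) < t := lt_of_le_of_lt hs hst
  set r : ℝ := t / (t - 1) with hr_def
  have htpos : (0 : ℝ) < t - 1 := by linarith
  have hr_pos : 0 < r := div_pos (by linarith) htpos
  have hr_ne : r ≠ 0 := ne_of_gt hr_pos
  have ht'top : t' ≠ ⊤ := by rw [ht']; exact ENNReal.ofReal_ne_top
  have ht're : t'.toReal = r := by rw [ht']; exact ENNReal.toReal_ofReal hr_pos.le
  have h0 : ∀ x, vertexWeight μ x ≠ 0 := fun x => (hpos x).ne'
  have h1 : ∀ x, vertexWeight μ x ≠ ⊤ := fun x => (hfin x).ne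
  unfold lpCapE
  refine le_antisymm ?_ zero_le
  refine iSup₂_le fun f hf => ?_
  obtain ⟨hf0, hfn⟩ := hf
  set Gf := greenOp μ Set.univ f with hGf
  have hsum1 : ∑' x, Gf x ^ r * vertexWeight μ x ≤ 1 := by
    rw [lqNormE, if_neg ht'top, ht're] at hfn
    have h2 := ENNReal.rpow_le_rpow hfn hr_pos.le
    rwa [← ENNReal.rpow_mul, one_div, inv_mul_cancel₀ hr_ne, ENNReal.rpow_one,
      ENNReal.one_rpow] at h2
  have hGf_ne_top : ∀ x, Gf x ≠ ⊤ := by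
    intro x hx
    have hterm : Gf x ^ r * vertexWeight μ x ≤ 1 :=
      le_trans (ENNReal.le_tsum x) hsum1
    rw [hx, ENNReal.top_rpow_of_pos hr_pos, ENNReal.top_mul (h0 x)] at hterm
    simp at hterm
  set M : ℝ≥0∞ := ∑ y ∈ K, green μ y y * f y * vertexWeight μ y with hM
  have hterm_le : ∀ y : V, green μ y y * f y * vertexWeight μ y ≤ Gf y := fun y =>
    ENNReal.le_tsum (f := fun z => greenKilled μ Set.univ y z * f z * vertexWeight μ z) y
  have hM_ne_top : M ≠ ⊤ := by
    rw [hM]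
    refine (ENNReal.sum_lt_top.mpr fun y _ => ?_).ne
    exact lt_of_le_of_lt (hterm_le y) (lt_top_iff_ne_top.mpr (hGf_ne_top y))
  have hGf_le : ∀ x, Gf x ≤ M := by
    intro x
    have heq : Gf x = ∑ y ∈ K, green μ x y * f y * vertexWeight μ y :=
      tsum_eq_sum fun y hy => by simp [hf0 y hy]
    rw [heq, hM]
    refine Finset.sum_le_sum fun y _ => ?_
    gcongr
    exact green_le_diag μ h0 h1 x y
  set c : ℝ≥0∞ := min 1 M⁻¹ with hc
  have hc_pos : 0 < c := lt_min one_pos (ENNReal.inv_pos.mpr hM_ne_top)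
  have hc_ne0 : c ≠ 0 := hc_pos.ne'
  have hc_le1 : c ≤ 1 := min_le_left _ _
  have hcM : c * M ≤ 1 := by
    rcases eq_or_ne M 0 with h | h
    · simp [h]
    · calc c * M ≤ M⁻¹ * M := mul_le_mul_left (min_le_right _ _) M
        _ = 1 := ENNReal.inv_mul_cancel h hM_ne_top
  set g : V → ℝ≥0∞ := fun x => c * f x with hg
  have hGg : ∀ x, greenOp μ Set.univ g x = c * Gf x := by
    intro x
    rw [hGf, greenOp, greenOp, ← ENNReal.tsum_mul_left]
    exact tsum_congr fun y => by rw [hg]; ring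
  have hptle : ∀ x, c * Gf x ≤ 1 := fun x =>
    le_trans (mul_le_mul_right (hGf_le x) c) hcM
  have hg_adm : lqNormE μ s' (greenOp μ Set.univ g) ≤ 1 := by
    by_cases hs1 : s = 1
    · rw [hs', if_pos hs1, lqNormE, if_pos rfl]
      refine iSup_le fun x => ?_
      rw [hGg x]
      exact hptle x
    · have hs1' : 1 < s := lt_of_le_of_ne hs (Ne.symm hs1)
      set r' : ℝ := s / (s - 1) with hr'
      have hspos : (0 : ℝ) < s - 1 := by linarith
      have hrr' : r ≤ r' := by
        rw [hr_def, hr', div_le_div_iff₀ htpos hspos]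
        nlinarith
      have hr'_pos : 0 < r' := lt_of_lt_of_le hr_pos hrr'
      have hs'top : s' ≠ ⊤ := by rw [hs', if_neg hs1]; exact ENNReal.ofReal_ne_top
      have hs're : s'.toReal = r' := by rw [hs', if_neg hs1]; exact ENNReal.toReal_ofReal hr'_pos.le
      rw [lqNormE, if_neg hs'top, hs're]
      have hinner : ∑' x, greenOp μ Set.univ g x ^ r' * vertexWeight μ x ≤ 1 := by
        have hpt : ∀ x, greenOp μ Set.univ g x ^ r' * vertexWeight μ x
            ≤ c ^ r * (Gf x ^ r * vertexWeight μ x) := by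
          intro x
          rw [hGg x]
          have h2 : (c * Gf x) ^ r' ≤ (c * Gf x) ^ r :=
            ENNReal.rpow_le_rpow_of_exponent_ge (hptle x) hrr'
          calc (c * Gf x) ^ r' * vertexWeight μ x
              ≤ (c * Gf x) ^ r * vertexWeight μ x := mul_le_mul_left h2 _
            _ = c ^ r * (Gf x ^ r * vertexWeight μ x) := by
                rw [ENNReal.mul_rpow_of_nonneg _ _ hr_pos.le, mul_assoc]
        calc ∑' x, greenOp μ Set.univ g x ^ r' * vertexWeight μ x
            ≤ ∑' x, c ^ r * (Gf x ^ r * vertexWeight μ x) := ENNReal.tsum_le_tsum hpt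
          _ = c ^ r * ∑' x, Gf x ^ r * vertexWeight μ x := ENNReal.tsum_mul_left
          _ ≤ 1 * 1 := mul_le_mul' (ENNReal.rpow_le_one hc_le1 hr_pos.le) hsum1
          _ = 1 := one_mul 1
      calc (∑' x, greenOp μ Set.univ g x ^ r' * vertexWeight μ x) ^ (1 / r')
          ≤ 1 ^ (1 / r') := ENNReal.rpow_le_rpow hinner (by positivity)
        _ = 1 := ENNReal.one_rpow _
  have hg_mem : g ∈ {f : V → ℝ≥0∞ | (∀ x, x ∉ K → f x = 0) ∧
      lqNormE μ s' (greenOp μ Set.univ f) ≤ 1} :=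
    ⟨fun x hx => by simp [hg, hf0 x hx], hg_adm⟩
  have hP := hpar K
  unfold lpCapE at hP
  have hle : (∑ x ∈ K, g x * vertexWeight μ x) ^ s
      ≤ ⨆ f ∈ {f : V → ℝ≥0∞ | (∀ x, x ∉ K → f x = 0) ∧
          lqNormE μ s' (greenOp μ Set.univ f) ≤ 1},
        (∑ x ∈ K, f x * vertexWeight μ x) ^ s :=
    le_iSup₂_of_le g hg_mem le_rfl
  rw [hP] at hle
  have hzero : (∑ x ∈ K, g x * vertexWeight μ x) ^ s = 0 :=
    le_antisymm hle zero_le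
  have hspos0 : (0 : ℝ) < s := lt_of_lt_of_le one_pos hs
  have hsum0 : ∑ x ∈ K, g x * vertexWeight μ x = 0 :=
    (ENNReal.rpow_eq_zero_iff_of_pos hspos0).mp hzero
  have h2 : c * ∑ x ∈ K, f x * vertexWeight μ x = ∑ x ∈ K, g x * vertexWeight μ x := by
    rw [Finset.mul_sum]
    exact Finset.sum_congr rfl fun x _ => by rw [hg]; ring
  have h3 := h2.trans hsum0
  rcases mul_eq_zero.mp h3 with h | h
  · exact absurd h hc_ne0
  · rw [h, ENNReal.zero_rpow_of_pos (by linarith : (0:ℝ) < t)]
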